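/- Consider a normalized CSP and two subsequences x₁, y₁, z and x₂, y₂, u of its variables with u ≺ z in the variable ordering. Then the canonic extension of f^z_{x₁,y₁} semi-commutes with the canonic extension of f^u_{x₂,y₂} with respect to the componentwise superset ordering ⊇. -/
import Mathlib


/-- Composition of binary relations. -/
def relComp {α β γ : Type*} (R : Set (α × β)) (S : Set (β × γ)) : Set (α × γ) :=
  {p | ∃ c, (p.1, c) ∈ R ∧ (c, p.2) ∈ S}

/-- Transposition of a binary relation. -/
def relTransp {α β : Type*} (R : Set (α × β)) : Set (β × α) :=
  {p | (p.2, p.1) ∈ R}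

/-- The canonic extension of `f^z_{x,y}` to the full product of the powersets
of all binary constraints of a normalized CSP with variables `Fin n` and
domains `D i`: the state `S` assigns to each pair `(i, j)` of variables the
current constraint on them, and the function replaces the component for
`(x, y)` by its intersection with `S(x,z) · S(y,z)ᵀ`, leaving everything else
unchanged. -/
def fExt {n : ℕ} {D : Fin n → Type*} (x y z : Fin n)
    (S : ∀ p : Fin n × Fin n, Set (D p.1 × D p.2)) :
    ∀ p : Fin n × Fin n, Set (D p.1 × D p.2) :=
  Function.update S (x, y)
    (S (x, y) ∩ relComp (S (x, z)) (relTransp (S (y, z))))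

/-- Semi-commutativity Lemma for directional path consistency: consider a
normalized CSP and two subsequences `x₁, y₁, z` and `x₂, y₂, u` of its
variables with `u < z`. Then the canonic extension of `f^z_{x₁,y₁}`
semi-commutes with the canonic extension of `f^u_{x₂,y₂}` w.r.t. the
componentwise ordering `⊇`: each component of
`(f^u_{x₂,y₂})⁺ ((f^z_{x₁,y₁})⁺ S)` is a subset of the corresponding component
of `(f^z_{x₁,y₁})⁺ ((f^u_{x₂,y₂})⁺ S)`. -/
lemma relComp_mono {α β γ : Type*} {R R' : Set (α × β)} {S S' : Set (β × γ)}
    (hR : R ⊆ R') (hS : S ⊆ S') : relComp R S ⊆ relComp R' S' := by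
  rintro p ⟨c, hc1, hc2⟩; exact ⟨c, hR hc1, hS hc2⟩

lemma relTransp_mono {α β : Type*} {R R' : Set (α × β)} (h : R ⊆ R') :
    relTransp R ⊆ relTransp R' := fun _ hp => h hp

lemma fExt_subset {n : ℕ} {D : Fin n → Type*} (x y z : Fin n)
    (S : ∀ p : Fin n × Fin n, Set (D p.1 × D p.2)) (p : Fin n × Fin n) :
    fExt x y z S p ⊆ S p := by
  unfold fExt
  rcases eq_or_ne p (x, y) with h | h
  · subst h; rw [Function.update_self]; exact Set.inter_subset_left
  · rw [Function.update_of_ne h]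

lemma upd_sub {α : Type*} {β : α → Type*} [DecidableEq α]
    (S : ∀ a, Set (β a)) (a : α) (T : Set (β a)) (q : α) :
    Function.update S a (S a ∩ T) q ⊆ S q := by
  rcases eq_or_ne q a with h | h
  · subst h; rw [Function.update_self]; exact Set.inter_subset_left
  · rw [Function.update_of_ne h]

lemma fExt_apply_ne {n : ℕ} {D : Fin n → Type*} (x y z : Fin n)
    (S : ∀ p : Fin n × Fin n, Set (D p.1 × D p.2)) {p : Fin n × Fin n}
    (h : p ≠ (x, y)) : fExt x y z S p = S p :=
  Function.update_of_ne h _ _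

theorem fz_semi_commutes {n : ℕ} {D : Fin n → Type*}
    (x₁ y₁ z x₂ y₂ u : Fin n)
    (h1 : x₁ < y₁) (h2 : y₁ < z) (h3 : x₂ < y₂) (h4 : y₂ < u) (huz : u < z) :
    ∀ (S : ∀ p : Fin n × Fin n, Set (D p.1 × D p.2)) (p : Fin n × Fin n),
      fExt x₂ y₂ u (fExt x₁ y₁ z S) p ⊆ fExt x₁ y₁ z (fExt x₂ y₂ u S) p := by
  intro S p
  have hyz : y₂ ≠ z := ne_of_lt (h4.trans huz)
  have hxz1 : ((x₁, z) : Fin n × Fin n) ≠ (x₂, y₂) := by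
    simp only [ne_eq, Prod.mk.injEq, not_and]; exact fun _ => hyz.symm
  have hyz1 : ((y₁, z) : Fin n × Fin n) ≠ (x₂, y₂) := by
    simp only [ne_eq, Prod.mk.injEq, not_and]; exact fun _ => hyz.symm
  by_cases e : ((x₂, y₂) : Fin n × Fin n) = (x₁, y₁)
  · -- same updated pair
    obtain ⟨ex, ey⟩ := Prod.mk.injEq .. ▸ e
    subst ex; subst ey
    by_cases hp : p = (x₂, y₂)
    · subst hp
      unfold fExt
      have hxu : ((x₂, u) : Fin n × Fin n) ≠ (x₂, y₂) := by
        simp only [ne_eq, Prod.mk.injEq, not_and]; exact fun _ => (ne_of_lt h4).symm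
      have hyu : ((y₂, u) : Fin n × Fin n) ≠ (x₂, y₂) := by
        simp only [ne_eq, Prod.mk.injEq, not_and]; exact fun _ => (ne_of_lt h4).symm
      rw [Function.update_self, Function.update_self, Function.update_self,
        Function.update_self, Function.update_of_ne hxu, Function.update_of_ne hyu,
        Function.update_of_ne hxz1, Function.update_of_ne hyz1]
      rw [Set.inter_right_comm]
    · rw [fExt_apply_ne _ _ _ _ hp, fExt_apply_ne _ _ _ _ hp,
        fExt_apply_ne _ _ _ _ hp, fExt_apply_ne _ _ _ _ hp]
  · -- distinct updated pairs
    by_cases hp1 : p = (x₁, y₁)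
    · subst hp1
      rw [fExt_apply_ne x₂ y₂ u _ (Ne.symm e)]
      unfold fExt
      rw [Function.update_self, Function.update_self,
        Function.update_of_ne (Ne.symm e), Function.update_of_ne hxz1,
        Function.update_of_ne hyz1]
    · by_cases hp2 : p = (x₂, y₂)
      · subst hp2
        simp only [fExt]
        rw [Function.update_self, Function.update_of_ne e, Function.update_of_ne e,
          Function.update_self]
        refine Set.inter_subset_inter (le_refl _)
          (relComp_mono (upd_sub ..) (relTransp_mono (upd_sub ..)))
      · rw [fExt_apply_ne _ _ _ _ hp2, fExt_apply_ne _ _ _ _ hp1,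
          fExt_apply_ne _ _ _ _ hp1, fExt_apply_ne _ _ _ _ hp2]
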